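/- Write v = aτ − b with a, b ∈ ℝ and y = Im τ > 0. Then the differential operator ∂/∂a + τ ∂/∂b applied to R_{j;m+1}(τ, v) equals −4√((m+1)y) e^{−4π(m+1)a²y} Θ_{j,m+1}(−τ̄, 2v̄), where Θ_{j,m+1}(τ,z) = Σ_{n∈ℤ} e^{2πi(m+1)z(n+j/(2(m+1)))} e^{2πiτ(m+1)(n+j/(2(m+1)))²} and bar denotes complex conjugation. -/

import Mathlib

set_option maxHeartbeats 1000000

noncomputable section

open MeasureTheory

open Complex

/-- Zwegers-type error function `E(x) = 2∫₀ˣ e^{−πu²} du`. -/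
def Efun (x : ℝ) : ℝ := 2 * ∫ u in (0 : ℝ)..x, Real.exp (-Real.pi * u ^ 2)

/-- The modified Zwegers function `R_{j;m+1}(τ,v)`: the sum over `n ≡ −j mod 2(m+1)`,
parametrized by `n = −j + 2(m+1)k`, `k ∈ ℤ`. -/
def Rz (m : ℕ) (j : ℤ) (τ v : ℂ) : ℂ :=
  ∑' k : ℤ,
    (((Real.sign (((-j + 2 * ((m : ℤ) + 1) * k : ℤ) : ℝ) + 1 / 2 + (j : ℝ) - 2 * ((m : ℝ) + 1)) -
        Efun ((((-j + 2 * ((m : ℤ) + 1) * k : ℤ) : ℝ) + 2 * ((m : ℝ) + 1) * (v.im / τ.im)) *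
          Real.sqrt (τ.im / ((m : ℝ) + 1)))) : ℝ) : ℂ) *
      Complex.exp (-(Real.pi : ℂ) * I * ((-j + 2 * ((m : ℤ) + 1) * k : ℤ) : ℂ) ^ 2 * τ /
          (2 * ((m : ℂ) + 1)) -
        2 * (Real.pi : ℂ) * I * ((-j + 2 * ((m : ℤ) + 1) * k : ℤ) : ℂ) * v)

/-- The classical theta function `Θ_{j,m₁}(τ,z)` of degree `m₁`. -/
def Theta (j : ℤ) (m₁ : ℕ) (τ z : ℂ) : ℂ :=
  ∑' n : ℤ,
    Complex.exp (2 * (Real.pi : ℂ) * I * (m₁ : ℂ) * z * ((n : ℂ) + (j : ℂ) / (2 * (m₁ : ℂ)))) *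
      Complex.exp (2 * (Real.pi : ℂ) * I * τ * (m₁ : ℂ) * ((n : ℂ) + (j : ℂ) / (2 * (m₁ : ℂ))) ^ 2)

lemma Efun_hasDerivAt (x : ℝ) : HasDerivAt Efun (2 * Real.exp (-Real.pi * x ^ 2)) x := by
  have hc : Continuous fun u : ℝ => Real.exp (-Real.pi * u ^ 2) := by continuity
  exact ((hc.integral_hasStrictDerivAt 0 x).hasDerivAt).const_mul 2

lemma Efun_neg (x : ℝ) : Efun (-x) = -Efun x := by
  have h : (∫ u in (0:ℝ)..x, Real.exp (-Real.pi * u ^ 2))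
      = ∫ u in (0:ℝ)..x, Real.exp (-Real.pi * (-u) ^ 2) := by simp
  rw [Efun, Efun]
  rw [h, intervalIntegral.integral_comp_neg (fun u => Real.exp (-Real.pi * u ^ 2))]
  rw [neg_zero, intervalIntegral.integral_symm]
  ring

lemma gauss_integrableOn (s : Set ℝ) : IntegrableOn (fun u : ℝ => Real.exp (-Real.pi * u ^ 2)) s := by
  exact (integrable_exp_neg_mul_sq Real.pi_pos).integrableOn

lemma gauss_Ioi_zero : (∫ u in Set.Ioi (0:ℝ), Real.exp (-Real.pi * u ^ 2)) = 1 / 2 := by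
  have := integral_gaussian_Ioi Real.pi
  rw [this, div_self Real.pi_pos.ne', Real.sqrt_one]

lemma Efun_eq_one_sub {x : ℝ} (hx : 0 ≤ x) :
    Efun x = 1 - 2 * ∫ u in Set.Ioi x, Real.exp (-Real.pi * u ^ 2) := by
  have hsplit : (∫ u in Set.Ioi (0:ℝ), Real.exp (-Real.pi * u ^ 2))
      = (∫ u in Set.Ioc (0:ℝ) x, Real.exp (-Real.pi * u ^ 2))
        + ∫ u in Set.Ioi x, Real.exp (-Real.pi * u ^ 2) := by
    rw [← setIntegral_union _ measurableSet_Ioi (gauss_integrableOn _) (gauss_integrableOn _),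
      Set.Ioc_union_Ioi_eq_Ioi hx]
    exact Set.Ioc_disjoint_Ioi le_rfl
  have hint : Efun x = 2 * ∫ u in Set.Ioc (0:ℝ) x, Real.exp (-Real.pi * u ^ 2) := by
    rw [Efun, intervalIntegral.integral_of_le hx]
  rw [hint]
  have := gauss_Ioi_zero
  rw [hsplit] at this
  linarith

lemma gauss_tail_nonneg (x : ℝ) : 0 ≤ ∫ u in Set.Ioi x, Real.exp (-Real.pi * u ^ 2) :=
  setIntegral_nonneg measurableSet_Ioi (fun u _ => (Real.exp_pos _).le)

lemma gauss_shift (x : ℝ) : (∫ u in Set.Ioi x, Real.exp (-Real.pi * u ^ 2))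
    = ∫ t in Set.Ioi (0:ℝ), Real.exp (-Real.pi * (t + x) ^ 2) := by
  rw [← integral_indicator measurableSet_Ioi, ← integral_indicator measurableSet_Ioi]
  rw [← MeasureTheory.integral_add_right_eq_self
    (Set.indicator (Set.Ioi x) (fun u => Real.exp (-Real.pi * u ^ 2))) x]
  congr 1
  ext t
  by_cases h : 0 < t
  · rw [Set.indicator_of_mem (by simpa using h), Set.indicator_of_mem (Set.mem_Ioi.mpr h)]
  · rw [Set.indicator_of_notMem (by simpa using h),
      Set.indicator_of_notMem (by simpa using h)]

lemma gauss_tail_le {x : ℝ} (hx : 0 ≤ x) :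
    (∫ u in Set.Ioi x, Real.exp (-Real.pi * u ^ 2)) ≤ Real.exp (-Real.pi * x ^ 2) / 2 := by
  rw [gauss_shift]
  have hle : (∫ t in Set.Ioi (0:ℝ), Real.exp (-Real.pi * (t + x) ^ 2))
      ≤ ∫ t in Set.Ioi (0:ℝ), Real.exp (-Real.pi * x ^ 2) * Real.exp (-Real.pi * t ^ 2) := by
    apply setIntegral_mono_on
    · apply Integrable.mono' (((gauss_integrableOn (Set.Ioi (0:ℝ))).const_mul
        (Real.exp (-Real.pi * x ^ 2))))
      · exact (Continuous.rexp (by continuity)).aestronglyMeasurable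
      · filter_upwards [MeasureTheory.ae_restrict_mem measurableSet_Ioi] with t ht
        rw [Real.norm_eq_abs, abs_of_pos (Real.exp_pos _), ← Real.exp_add]
        apply Real.exp_le_exp.mpr
        nlinarith [Set.mem_Ioi.mp ht, Real.pi_pos,
          mul_nonneg (mul_nonneg Real.pi_pos.le (Set.mem_Ioi.mp ht).le) hx]
    · exact (gauss_integrableOn _).const_mul _
    · exact measurableSet_Ioi
    · intro t ht
      rw [← Real.exp_add]
      apply Real.exp_le_exp.mpr
      nlinarith [Set.mem_Ioi.mp ht, Real.pi_pos,
        mul_nonneg (mul_nonneg Real.pi_pos.le (Set.mem_Ioi.mp ht).le) hx]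
  rw [MeasureTheory.integral_const_mul, gauss_Ioi_zero] at hle
  linarith

lemma one_sub_Efun_nonneg (x : ℝ) : 0 ≤ 1 - Efun x := by
  rcases le_or_gt 0 x with hx | hx
  · rw [Efun_eq_one_sub hx]
    have := gauss_tail_nonneg x
    linarith
  · have h1 : Efun x = -Efun (-x) := by rw [← Efun_neg, neg_neg]
    rw [h1, Efun_eq_one_sub (by linarith : (0:ℝ) ≤ -x)]
    have h2 := gauss_tail_le (by linarith : (0:ℝ) ≤ -x)
    have h3 : Real.exp (-Real.pi * (-x) ^ 2) ≤ 1 := by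
      rw [Real.exp_le_one_iff]
      nlinarith [Real.pi_pos]
    linarith

lemma one_sub_Efun_le (x : ℝ) : 1 - Efun x ≤ 2 * Real.exp (-Real.pi * (x * |x|)) := by
  rcases le_or_gt 0 x with hx | hx
  · rw [Efun_eq_one_sub hx, _root_.abs_of_nonneg hx, ← sq]
    have := gauss_tail_le hx
    have hp : (0:ℝ) < 2 := two_pos
    nlinarith [Real.exp_pos (-Real.pi * x ^ 2)]
  · have h1 : Efun x = -Efun (-x) := by rw [← Efun_neg, neg_neg]
    rw [h1, Efun_eq_one_sub (by linarith : (0:ℝ) ≤ -x)]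
    have h2 := gauss_tail_le (by linarith : (0:ℝ) ≤ -x)
    have h6 : (1:ℝ) ≤ Real.exp (-Real.pi * (x * |x|)) := by
      apply Real.one_le_exp
      rw [abs_of_neg hx]
      nlinarith [Real.pi_pos]
    have h4 := gauss_tail_nonneg (-x)
    linarith

def NN (m : ℕ) (j k : ℤ) : ℤ := -j + 2 * ((m : ℤ) + 1) * k

def zCF (m : ℕ) (j : ℤ) (τ : ℂ) (k : ℤ) (t : ℝ) : ℝ :=
  Real.sign (((NN m j k : ℤ) : ℝ) + 1 / 2 + (j : ℝ) - 2 * ((m : ℝ) + 1)) -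
    Efun ((((NN m j k : ℤ) : ℝ) + 2 * ((m : ℝ) + 1) * t) * Real.sqrt (τ.im / ((m : ℝ) + 1)))

def zEx (m : ℕ) (j : ℤ) (τ v : ℂ) (k : ℤ) : ℂ :=
  Complex.exp (-(Real.pi : ℂ) * I * ((NN m j k : ℤ) : ℂ) ^ 2 * τ / (2 * ((m : ℂ) + 1)) -
    2 * (Real.pi : ℂ) * I * ((NN m j k : ℤ) : ℂ) * v)

lemma Rz_eq (m : ℕ) (j : ℤ) (τ : ℂ) (hτ : τ.im ≠ 0) (t s : ℝ) :
    Rz m j τ ((t : ℂ) * τ - (s : ℂ)) =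
      ∑' k : ℤ, ((zCF m j τ k t : ℝ) : ℂ) * zEx m j τ ((t : ℂ) * τ - (s : ℂ)) k := by
  rw [Rz]
  apply tsum_congr
  intro k
  have him : (((t : ℂ) * τ - (s : ℂ)).im / τ.im) = t := by
    simp only [Complex.sub_im, Complex.mul_im, Complex.ofReal_re, Complex.ofReal_im,
      zero_mul, add_zero, sub_zero]
    field_simp
  rw [him]
  rfl

lemma abs_zEx (m : ℕ) (j k : ℤ) (τ : ℂ) (t s : ℝ) :
    ‖zEx m j τ ((t : ℂ) * τ - (s : ℂ)) k‖ =
      Real.exp ((Real.pi * ((NN m j k : ℤ) : ℝ) ^ 2 / (2 * ((m : ℝ) + 1)) +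
        2 * Real.pi * ((NN m j k : ℤ) : ℝ) * t) * τ.im) := by
  have hm : ((m : ℂ) + 1) ≠ 0 := by
    intro h
    have := congrArg Complex.re h
    simp at this
    nlinarith [this]
  rw [zEx, show (-(Real.pi : ℂ) * I * ((NN m j k : ℤ) : ℂ) ^ 2 * τ / (2 * ((m : ℂ) + 1)) -
        2 * (Real.pi : ℂ) * I * ((NN m j k : ℤ) : ℂ) * ((t : ℂ) * τ - (s : ℂ)))
      = ((-(Real.pi * ((NN m j k : ℤ) : ℝ) ^ 2 / (2 * ((m : ℝ) + 1)) +
          2 * Real.pi * ((NN m j k : ℤ) : ℝ) * t) : ℝ) : ℂ) * τ * I +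
        ((2 * Real.pi * ((NN m j k : ℤ) : ℝ) * s : ℝ) : ℂ) * I from by
    push_cast
    field_simp
    ring]
  rw [Complex.norm_exp]
  simp only [Complex.add_re, Complex.mul_I_re, Complex.im_ofReal_mul, Complex.ofReal_im]
  ring_nf

lemma sgn_sub_Efun_bound {x M : ℝ} (h : x < 0 → x ^ 2 ≤ M ^ 2) :
    |1 - Efun x| ≤ 2 * Real.exp (2 * Real.pi * M ^ 2) * Real.exp (-Real.pi * x ^ 2) := by
  rw [_root_.abs_of_nonneg (one_sub_Efun_nonneg x)]
  refine le_trans (one_sub_Efun_le x) ?_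
  rw [mul_assoc, ← Real.exp_add]
  rcases le_or_gt 0 x with hx | hx
  · rw [_root_.abs_of_nonneg hx, ← sq]
    have h1 : -Real.pi * x ^ 2 ≤ 2 * Real.pi * M ^ 2 + -Real.pi * x ^ 2 := by
      nlinarith [Real.pi_pos, sq_nonneg M]
    have := Real.exp_le_exp.mpr h1
    linarith
  · rw [abs_of_neg hx]
    have h2 : x ^ 2 ≤ M ^ 2 := h hx
    have h1 : -Real.pi * (x * -x) ≤ 2 * Real.pi * M ^ 2 + -Real.pi * x ^ 2 := by
      nlinarith [Real.pi_pos]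
    have := Real.exp_le_exp.mpr h1
    linarith

lemma neg_sgn_sub_Efun_bound {x M : ℝ} (h : 0 < x → x ^ 2 ≤ M ^ 2) :
    |(-1 : ℝ) - Efun x| ≤ 2 * Real.exp (2 * Real.pi * M ^ 2) * Real.exp (-Real.pi * x ^ 2) := by
  have h1 : |(-1 : ℝ) - Efun x| = |1 - Efun (-x)| := by
    rw [Efun_neg, sub_neg_eq_add, ← abs_neg]
    ring_nf
  rw [h1]
  have h2 := sgn_sub_Efun_bound (x := -x) (M := M) (by intro hx; rw [neg_sq]; exact h (by linarith))
  rw [neg_sq] at h2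
  exact h2

lemma zEx_hasDerivAt_a (m : ℕ) (j k : ℤ) (τ : ℂ) (s t : ℝ) :
    HasDerivAt (fun t' : ℝ => zEx m j τ ((t' : ℂ) * τ - (s : ℂ)) k)
      (-2 * (Real.pi : ℂ) * I * ((NN m j k : ℤ) : ℂ) * τ *
        zEx m j τ ((t : ℂ) * τ - (s : ℂ)) k) t := by
  set A : ℂ := -(Real.pi : ℂ) * I * ((NN m j k : ℤ) : ℂ) ^ 2 * τ / (2 * ((m : ℂ) + 1)) +
      2 * (Real.pi : ℂ) * I * ((NN m j k : ℤ) : ℂ) * (s : ℂ) with hA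
  set B : ℂ := -2 * (Real.pi : ℂ) * I * ((NN m j k : ℤ) : ℂ) * τ with hB
  have hfun : ∀ t' : ℝ, zEx m j τ ((t' : ℂ) * τ - (s : ℂ)) k = Complex.exp (A + B * (t' : ℂ)) := by
    intro t'
    rw [zEx, hA, hB]
    congr 1
    ring
  have h1 : HasDerivAt (fun t' : ℝ => A + B * (t' : ℂ)) B t := by
    have h0 : HasDerivAt (fun t' : ℝ => (t' : ℂ)) 1 t := Complex.ofRealCLM.hasDerivAt
    simpa using (h0.const_mul B).const_add A
  have h2 := h1.cexp
  have h3 : HasDerivAt (fun t' : ℝ => Complex.exp (A + B * (t' : ℂ)))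
      (B * zEx m j τ ((t : ℂ) * τ - (s : ℂ)) k) t := by
    rw [hfun t]
    simpa [mul_comm] using h2
  have h4 : (fun t' : ℝ => zEx m j τ ((t' : ℂ) * τ - (s : ℂ)) k) =
      fun t' : ℝ => Complex.exp (A + B * (t' : ℂ)) := funext hfun
  rw [h4]
  exact h3

-- derivative of the exponential in the b-direction

lemma zEx_hasDerivAt_b (m : ℕ) (j k : ℤ) (τ : ℂ) (s t : ℝ) :
    HasDerivAt (fun t' : ℝ => zEx m j τ ((s : ℂ) * τ - (t' : ℂ)) k)
      (2 * (Real.pi : ℂ) * I * ((NN m j k : ℤ) : ℂ) *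
        zEx m j τ ((s : ℂ) * τ - (t : ℂ)) k) t := by
  set A : ℂ := -(Real.pi : ℂ) * I * ((NN m j k : ℤ) : ℂ) ^ 2 * τ / (2 * ((m : ℂ) + 1)) -
      2 * (Real.pi : ℂ) * I * ((NN m j k : ℤ) : ℂ) * ((s : ℂ) * τ) with hA
  set B : ℂ := 2 * (Real.pi : ℂ) * I * ((NN m j k : ℤ) : ℂ) with hB
  have hfun : ∀ t' : ℝ, zEx m j τ ((s : ℂ) * τ - (t' : ℂ)) k = Complex.exp (A + B * (t' : ℂ)) := by
    intro t'
    rw [zEx, hA, hB]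
    congr 1
    ring
  have h1 : HasDerivAt (fun t' : ℝ => A + B * (t' : ℂ)) B t := by
    have h0 : HasDerivAt (fun t' : ℝ => (t' : ℂ)) 1 t := Complex.ofRealCLM.hasDerivAt
    simpa using (h0.const_mul B).const_add A
  have h2 := h1.cexp
  have h3 : HasDerivAt (fun t' : ℝ => Complex.exp (A + B * (t' : ℂ)))
      (B * zEx m j τ ((s : ℂ) * τ - (t : ℂ)) k) t := by
    rw [hfun t]
    simpa [mul_comm] using h2
  rw [funext hfun]
  exact h3

-- derivative of the coefficient

lemma zCF_hasDerivAt (m : ℕ) (j k : ℤ) (τ : ℂ) (t : ℝ) :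
    HasDerivAt (fun t' : ℝ => zCF m j τ k t')
      (-(2 * Real.exp (-Real.pi * ((((NN m j k : ℤ) : ℝ) + 2 * ((m : ℝ) + 1) * t) *
          Real.sqrt (τ.im / ((m : ℝ) + 1))) ^ 2) *
        (2 * ((m : ℝ) + 1) * Real.sqrt (τ.im / ((m : ℝ) + 1))))) t := by
  have hin : HasDerivAt (fun t' : ℝ => (((NN m j k : ℤ) : ℝ) + 2 * ((m : ℝ) + 1) * t') *
      Real.sqrt (τ.im / ((m : ℝ) + 1))) (2 * ((m : ℝ) + 1) * Real.sqrt (τ.im / ((m : ℝ) + 1))) t := by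
    have h0 : HasDerivAt (fun t' : ℝ => ((NN m j k : ℤ) : ℝ) + 2 * ((m : ℝ) + 1) * t')
        (2 * ((m : ℝ) + 1)) t := by
      simpa using ((hasDerivAt_id t).const_mul (2 * ((m : ℝ) + 1))).const_add ((NN m j k : ℤ) : ℝ)
    simpa using h0.mul_const (Real.sqrt (τ.im / ((m : ℝ) + 1)))
  have hE := (Efun_hasDerivAt ((((NN m j k : ℤ) : ℝ) + 2 * ((m : ℝ) + 1) * t) *
      Real.sqrt (τ.im / ((m : ℝ) + 1)))).comp t hin
  have := (hasDerivAt_const t (Real.sign (((NN m j k : ℤ) : ℝ) + 1 / 2 + (j : ℝ) -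
      2 * ((m : ℝ) + 1)))).sub hE
  simpa [zCF, Function.comp_def, Pi.sub_def] using this

lemma NN_injective (m : ℕ) (j : ℤ) : Function.Injective (NN m j) := by
  intro k1 k2 h
  rw [NN, NN] at h
  have h2 : 2 * ((m : ℤ) + 1) * k1 = 2 * ((m : ℤ) + 1) * k2 := by omega
  exact mul_left_cancel₀ (by positivity) h2

lemma NN_cast (m : ℕ) (j k : ℤ) : ((NN m j k : ℤ) : ℝ) = -(j : ℝ) + 2 * ((m : ℝ) + 1) * (k : ℝ) := by
  rw [NN]; push_cast; ring

lemma zCF_bound (m : ℕ) (j k : ℤ) (τ : ℂ) (hτ : 0 < τ.im) (a t : ℝ) (ht : |t - a| ≤ 1) :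
    |zCF m j τ k t| ≤
      2 * Real.exp (2 * Real.pi * ((|(j : ℝ)| + 2 * ((m : ℝ) + 1) * (|a| + 1)) *
          Real.sqrt (τ.im / ((m : ℝ) + 1))) ^ 2) *
        Real.exp (-Real.pi * ((((NN m j k : ℤ) : ℝ) + 2 * ((m : ℝ) + 1) * t) *
          Real.sqrt (τ.im / ((m : ℝ) + 1))) ^ 2) := by
  have hc1 : (1 : ℝ) ≤ (m : ℝ) + 1 := by
    have : (0 : ℝ) ≤ (m : ℝ) := Nat.cast_nonneg m
    linarith
  have hc0 : (0 : ℝ) < (m : ℝ) + 1 := by linarith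
  have hq : 0 < Real.sqrt (τ.im / ((m : ℝ) + 1)) := Real.sqrt_pos.mpr (by positivity)
  set c : ℝ := (m : ℝ) + 1 with hcdef
  set q : ℝ := Real.sqrt (τ.im / c) with hqdef
  have hta := abs_le.mp ht
  have hMsq : ∀ x : ℝ, |x| ≤ |(j : ℝ)| + 2 * c * (|a| + 1) →
      x ^ 2 * q ^ 2 ≤ ((|(j : ℝ)| + 2 * c * (|a| + 1)) * q) ^ 2 := by
    intro x hx
    rw [mul_pow]
    have h1 : x ^ 2 ≤ (|(j : ℝ)| + 2 * c * (|a| + 1)) ^ 2 := by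
      have := abs_nonneg x
      nlinarith [le_abs_self x, neg_abs_le x]
    nlinarith [sq_nonneg q]
  rw [zCF, show ((NN m j k : ℤ) : ℝ) + 1 / 2 + (j : ℝ) - 2 * c =
      2 * c * ((k : ℝ) - 1) + 1 / 2 from by rw [NN_cast]; ring]
  rcases le_or_gt 1 k with hk | hk
  · have hk1 : (1 : ℝ) ≤ (k : ℝ) := by exact_mod_cast hk
    rw [Real.sign_of_pos (by nlinarith)]
    apply sgn_sub_Efun_bound
    intro hxneg
    rw [mul_pow]
    apply hMsq
    rw [← hcdef, ← hqdef] at hxneg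
    have hneg : ((NN m j k : ℤ) : ℝ) + 2 * c * t < 0 := by
      by_contra hcon
      push_neg at hcon
      nlinarith [mul_nonneg hcon hq.le]
    rw [NN_cast] at hneg ⊢
    rw [abs_of_neg hneg]
    nlinarith [le_abs_self (j : ℝ), neg_abs_le (j : ℝ), le_abs_self a, neg_abs_le a]
  · have hk0 : (k : ℝ) ≤ 0 := by exact_mod_cast Int.lt_add_one_iff.mp (by omega)
    rw [Real.sign_of_neg (by nlinarith)]
    apply neg_sgn_sub_Efun_bound
    intro hxpos
    rw [mul_pow]
    apply hMsq
    rw [← hcdef, ← hqdef] at hxpos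
    have hpos : 0 < ((NN m j k : ℤ) : ℝ) + 2 * c * t := by
      by_contra hcon
      push_neg at hcon
      nlinarith [mul_nonneg (neg_nonneg.mpr hcon) hq.le]
    rw [NN_cast] at hpos ⊢
    rw [abs_of_pos hpos]
    nlinarith [le_abs_self (j : ℝ), neg_abs_le (j : ℝ), le_abs_self a, neg_abs_le a]

lemma exp_mul_abs_zEx_le (m : ℕ) (j k : ℤ) (τ : ℂ) (hτ : 0 < τ.im) (a t s : ℝ)
    (ht : |t - a| ≤ 1) :
    Real.exp (-Real.pi * ((((NN m j k : ℤ) : ℝ) + 2 * ((m : ℝ) + 1) * t) *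
        Real.sqrt (τ.im / ((m : ℝ) + 1))) ^ 2) *
      ‖zEx m j τ ((t : ℂ) * τ - (s : ℂ)) k‖ ≤
    Real.exp (-Real.pi * ((τ.im / (2 * ((m : ℝ) + 1))) * ((NN m j k : ℤ) : ℝ) ^ 2 -
        2 * ((|a| + 1) * τ.im) * |((NN m j k : ℤ) : ℝ)|)) := by
  have hc0 : (0 : ℝ) < (m : ℝ) + 1 := by positivity
  have hy : 0 < τ.im := hτ
  rw [abs_zEx, ← Real.exp_add, Real.exp_le_exp]
  have hsq : (Real.sqrt (τ.im / ((m : ℝ) + 1))) ^ 2 = τ.im / ((m : ℝ) + 1) :=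
    Real.sq_sqrt (by positivity)
  rw [mul_pow, hsq]
  set nr : ℝ := ((NN m j k : ℤ) : ℝ) with hnr
  set c : ℝ := (m : ℝ) + 1 with hcdef
  set y : ℝ := τ.im with hydef
  have hid : -Real.pi * ((nr + 2 * c * t) ^ 2 * (y / c)) +
      (Real.pi * nr ^ 2 / (2 * c) + 2 * Real.pi * nr * t) * y =
      -Real.pi * (y / (2 * c) * nr ^ 2) - 2 * Real.pi * nr * t * y -
        4 * Real.pi * c * t ^ 2 * y := by
    field_simp
    ring
  rw [hid]
  have h1 : |t| ≤ |a| + 1 := by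
    have := abs_le.mp ht
    cases' abs_cases t with h h <;> cases' abs_cases a with h' h' <;> nlinarith
  have h2 : -(nr * t) ≤ |nr| * (|a| + 1) := by
    calc -(nr * t) ≤ |nr * t| := by
          have := neg_abs_le (nr * t)
          have := le_abs_self (nr * t)
          cases' abs_cases (nr * t) with h h <;> linarith
      _ = |nr| * |t| := abs_mul nr t
      _ ≤ |nr| * (|a| + 1) := by
          exact mul_le_mul_of_nonneg_left h1 (abs_nonneg nr)
  nlinarith [Real.pi_pos, mul_le_mul_of_nonneg_left h2 (by positivity : (0:ℝ) ≤ 2 * Real.pi * y),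
    mul_nonneg (mul_nonneg (mul_nonneg (by positivity : (0:ℝ) ≤ 4 * Real.pi) hc0.le)
      (sq_nonneg t)) hy.le]

lemma exponent_id (m : ℕ) (j k : ℤ) (τ : ℂ) (a b : ℝ) :
    ((-Real.pi * ((((NN m j k : ℤ) : ℝ) + 2 * ((m : ℝ) + 1) * a) ^ 2 *
        (τ.im / ((m : ℝ) + 1))) : ℝ) : ℂ) +
      (-(Real.pi : ℂ) * I * ((NN m j k : ℤ) : ℂ) ^ 2 * τ / (2 * ((m : ℂ) + 1)) -
        2 * (Real.pi : ℂ) * I * ((NN m j k : ℤ) : ℂ) * ((a : ℂ) * τ - (b : ℂ)))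
    = -(4 * (Real.pi : ℂ)) * ((m : ℂ) + 1) * (a : ℂ) ^ 2 * (τ.im : ℂ) +
      (2 * (Real.pi : ℂ) * I * ((m + 1 : ℕ) : ℂ) *
          (2 * (starRingEnd ℂ) ((a : ℂ) * τ - (b : ℂ))) *
          (((-k : ℤ) : ℂ) + (j : ℂ) / (2 * ((m + 1 : ℕ) : ℂ))) +
       2 * (Real.pi : ℂ) * I * (-(starRingEnd ℂ) τ) * ((m + 1 : ℕ) : ℂ) *
          (((-k : ℤ) : ℂ) + (j : ℂ) / (2 * ((m + 1 : ℕ) : ℂ))) ^ 2) := by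
  have hm0 : ((m : ℂ) + 1) ≠ 0 := by
    intro h
    have := congrArg Complex.re h
    simp at this
    nlinarith [this, Nat.cast_nonneg (α := ℝ) m]
  have hconjτ : (starRingEnd ℂ) τ = τ - 2 * (τ.im : ℂ) * I := by
    have h := Complex.sub_conj τ
    push_cast at h
    linear_combination -h
  have hconjv : (starRingEnd ℂ) ((a : ℂ) * τ - (b : ℂ)) = (a : ℂ) * (starRingEnd ℂ) τ - (b : ℂ) := by
    rw [map_sub, map_mul, Complex.conj_ofReal, Complex.conj_ofReal]
  rw [hconjv, hconjτ, NN]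
  push_cast
  field_simp
  ring_nf
  simp only [Complex.I_sq]
  ring

/-- In the real coordinates `v = aτ − b`,
`(∂/∂a + τ ∂/∂b) R_{j;m+1}(τ,v) = −4√((m+1)y) e^{−4π(m+1)a²y} Θ_{j,m+1}(−τ̄, 2v̄)`,
where `y = Im τ`. -/
theorem stmt8 (m : ℕ) (j : ℤ) (τ : ℂ) (hτ : 0 < τ.im) (a b : ℝ) :
    deriv (fun a' : ℝ => Rz m j τ ((a' : ℂ) * τ - (b : ℂ))) a +
        τ * deriv (fun b' : ℝ => Rz m j τ ((a : ℂ) * τ - (b' : ℂ))) b =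
      -4 * ((Real.sqrt (((m : ℝ) + 1) * τ.im) : ℝ) : ℂ) *
        Complex.exp (-(4 * (Real.pi : ℂ)) * ((m : ℂ) + 1) * (a : ℂ) ^ 2 * (τ.im : ℂ)) *
        Theta j (m + 1) (-(starRingEnd ℂ) τ)
          (2 * (starRingEnd ℂ) ((a : ℂ) * τ - (b : ℂ))) := by
  have hy : 0 < τ.im := hτ
  have hc0 : (0 : ℝ) < (m : ℝ) + 1 := by positivity
  have hq0 : 0 < Real.sqrt (τ.im / ((m : ℝ) + 1)) := Real.sqrt_pos.mpr (by positivity)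
  have hT : (0 : ℝ) < τ.im / (2 * ((m : ℝ) + 1)) := by positivity
  -- abbreviations
  set q : ℝ := Real.sqrt (τ.im / ((m : ℝ) + 1)) with hqdef
  set M : ℝ := (|(j : ℝ)| + 2 * ((m : ℝ) + 1) * (|a| + 1)) * q with hMdef
  set C₀ : ℝ := 4 * ((m : ℝ) + 1) * q + 2 * Real.exp (2 * Real.pi * M ^ 2) with hC0def
  set C₂ : ℝ := 4 * Real.pi * (‖τ‖ + 1) * Real.exp (2 * Real.pi * M ^ 2) with hC2def
  have hC0pos : 0 ≤ C₀ := by positivity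
  have hC2pos : 0 ≤ C₂ := by positivity
  set T : ℝ := τ.im / (2 * ((m : ℝ) + 1)) with hTdef
  set S : ℝ := (|a| + 1) * τ.im with hSdef
  set u : ℤ → ℝ := fun i =>
    C₀ * Real.exp (-Real.pi * (T * (i : ℝ) ^ 2 - 2 * S * |(i : ℝ)|)) +
    C₂ * |(i : ℝ)| * Real.exp (-Real.pi * (T * (i : ℝ) ^ 2 - 2 * S * |(i : ℝ)|)) with hudef
  have hBnn : ∀ i : ℤ, 0 ≤ Real.exp (-Real.pi * (T * (i : ℝ) ^ 2 - 2 * S * |(i : ℝ)|)) :=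
    fun i => (Real.exp_pos _).le
  have hsu : Summable u := by
    have h0 := (summable_pow_mul_jacobiTheta₂_term_bound S hT 0).mul_left C₀
    have h1 := (summable_pow_mul_jacobiTheta₂_term_bound S hT 1).mul_left C₂
    have := h0.add h1
    apply this.congr
    intro i
    rw [hudef]
    push_cast
    ring
  have huN : Summable (fun k : ℤ => u (NN m j k)) := hsu.comp_injective (NN_injective m j)
  -- term functions
  set F : ℤ → ℝ → ℂ := fun k t =>
    ((zCF m j τ k t : ℝ) : ℂ) * zEx m j τ ((t : ℂ) * τ - (b : ℂ)) k with hFdef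
  set F' : ℤ → ℝ → ℂ := fun k t =>
    ((-(2 * Real.exp (-Real.pi * ((((NN m j k : ℤ) : ℝ) + 2 * ((m : ℝ) + 1) * t) * q) ^ 2) *
        (2 * ((m : ℝ) + 1) * q)) : ℝ) : ℂ) * zEx m j τ ((t : ℂ) * τ - (b : ℂ)) k +
      ((zCF m j τ k t : ℝ) : ℂ) *
        (-2 * (Real.pi : ℂ) * I * ((NN m j k : ℤ) : ℂ) * τ *
          zEx m j τ ((t : ℂ) * τ - (b : ℂ)) k) with hF'def
  set G : ℤ → ℝ → ℂ := fun k t =>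
    ((zCF m j τ k a : ℝ) : ℂ) * zEx m j τ ((a : ℂ) * τ - (t : ℂ)) k with hGdef
  set G' : ℤ → ℝ → ℂ := fun k t =>
    ((zCF m j τ k a : ℝ) : ℂ) *
      (2 * (Real.pi : ℂ) * I * ((NN m j k : ℤ) : ℂ) *
        zEx m j τ ((a : ℂ) * τ - (t : ℂ)) k) with hG'def
  have hFd : ∀ (k : ℤ) (t : ℝ), HasDerivAt (F k) (F' k t) t := fun k t =>
    ((zCF_hasDerivAt m j k τ t).ofReal_comp).mul (zEx_hasDerivAt_a m j k τ b t)
  have hGd : ∀ (k : ℤ) (t : ℝ), HasDerivAt (G k) (G' k t) t := fun k t =>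
    (zEx_hasDerivAt_b m j k τ a t).const_mul _
  -- norm bounds
  have hnormEx : ∀ (k : ℤ) (t s : ℝ), |t - a| ≤ 1 →
      Real.exp (-Real.pi * ((((NN m j k : ℤ) : ℝ) + 2 * ((m : ℝ) + 1) * t) * q) ^ 2) *
        ‖zEx m j τ ((t : ℂ) * τ - (s : ℂ)) k‖ ≤
      Real.exp (-Real.pi * (T * ((NN m j k : ℤ) : ℝ) ^ 2 - 2 * S * |((NN m j k : ℤ) : ℝ)|)) := by
    intro k t s ht
    have := exp_mul_abs_zEx_le m j k τ hτ a t s ht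
    calc _ ≤ _ := this
    _ = _ := by rw [hTdef, hSdef]
  have hcfb : ∀ (k : ℤ) (t : ℝ), |t - a| ≤ 1 →
      |zCF m j τ k t| ≤ 2 * Real.exp (2 * Real.pi * M ^ 2) *
        Real.exp (-Real.pi * ((((NN m j k : ℤ) : ℝ) + 2 * ((m : ℝ) + 1) * t) * q) ^ 2) :=
    fun k t ht => zCF_bound m j k τ hτ a t ht
  have habs : ∀ (k : ℤ) (t s : ℝ), ‖zEx m j τ ((t : ℂ) * τ - (s : ℂ)) k‖ =
      ‖zEx m j τ ((t : ℂ) * τ - (s : ℂ)) k‖ := fun k t s => rfl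
  have hnormτcoef : ∀ k : ℤ, ‖(-2 : ℂ) * (Real.pi : ℂ) * I * ((NN m j k : ℤ) : ℂ) * τ‖ =
      2 * Real.pi * |((NN m j k : ℤ) : ℝ)| * ‖τ‖ := by
    intro k
    simp only [norm_mul, norm_neg, Complex.norm_I, Complex.norm_real, Real.norm_eq_abs,
      Complex.norm_intCast]
    rw [abs_of_pos Real.pi_pos, show ‖(2 : ℂ)‖ = 2 from by simp]
    push_cast
    ring
  have hnormcoef2 : ∀ k : ℤ, ‖(2 : ℂ) * (Real.pi : ℂ) * I * ((NN m j k : ℤ) : ℂ)‖ =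
      2 * Real.pi * |((NN m j k : ℤ) : ℝ)| := by
    intro k
    simp only [norm_mul, Complex.norm_I, Complex.norm_real, Real.norm_eq_abs,
      Complex.norm_intCast]
    rw [abs_of_pos Real.pi_pos, show ‖(2 : ℂ)‖ = 2 from by simp]
    push_cast
    ring
  have hnormF' : ∀ (k : ℤ) (t : ℝ), |t - a| ≤ 1 → ‖F' k t‖ ≤ u (NN m j k) := by
    intro k t ht
    rw [hF'def]
    refine le_trans (norm_add_le _ _) ?_
    have hb1 : ‖((-(2 * Real.exp (-Real.pi * ((((NN m j k : ℤ) : ℝ) + 2 * ((m : ℝ) + 1) * t) * q) ^ 2) *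
        (2 * ((m : ℝ) + 1) * q)) : ℝ) : ℂ) * zEx m j τ ((t : ℂ) * τ - (b : ℂ)) k‖ ≤
        C₀ * Real.exp (-Real.pi * (T * ((NN m j k : ℤ) : ℝ) ^ 2 - 2 * S * |((NN m j k : ℤ) : ℝ)|)) := by
      rw [norm_mul, Complex.norm_real, Real.norm_eq_abs, abs_neg,
        abs_of_pos (by positivity), habs]
      calc 2 * Real.exp (-Real.pi * ((((NN m j k : ℤ) : ℝ) + 2 * ((m : ℝ) + 1) * t) * q) ^ 2) *
            (2 * ((m : ℝ) + 1) * q) * ‖zEx m j τ ((t : ℂ) * τ - (b : ℂ)) k‖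
          = (4 * ((m : ℝ) + 1) * q) *
            (Real.exp (-Real.pi * ((((NN m j k : ℤ) : ℝ) + 2 * ((m : ℝ) + 1) * t) * q) ^ 2) *
              ‖zEx m j τ ((t : ℂ) * τ - (b : ℂ)) k‖) := by ring
        _ ≤ (4 * ((m : ℝ) + 1) * q) *
            Real.exp (-Real.pi * (T * ((NN m j k : ℤ) : ℝ) ^ 2 - 2 * S * |((NN m j k : ℤ) : ℝ)|)) := by
            exact mul_le_mul_of_nonneg_left (hnormEx k t b ht) (by positivity)
        _ ≤ C₀ * Real.exp (-Real.pi * (T * ((NN m j k : ℤ) : ℝ) ^ 2 - 2 * S * |((NN m j k : ℤ) : ℝ)|)) := by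
            apply mul_le_mul_of_nonneg_right _ (Real.exp_pos _).le
            rw [hC0def]
            nlinarith [Real.exp_pos (2 * Real.pi * M ^ 2)]
    have hb2 : ‖((zCF m j τ k t : ℝ) : ℂ) *
        (-2 * (Real.pi : ℂ) * I * ((NN m j k : ℤ) : ℂ) * τ *
          zEx m j τ ((t : ℂ) * τ - (b : ℂ)) k)‖ ≤
        C₂ * |((NN m j k : ℤ) : ℝ)| *
          Real.exp (-Real.pi * (T * ((NN m j k : ℤ) : ℝ) ^ 2 - 2 * S * |((NN m j k : ℤ) : ℝ)|)) := by
      rw [norm_mul, norm_mul, Complex.norm_real, Real.norm_eq_abs, hnormτcoef, habs]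
      calc |zCF m j τ k t| * (2 * Real.pi * |((NN m j k : ℤ) : ℝ)| * ‖τ‖ *
            ‖zEx m j τ ((t : ℂ) * τ - (b : ℂ)) k‖)
          ≤ (2 * Real.exp (2 * Real.pi * M ^ 2) *
              Real.exp (-Real.pi * ((((NN m j k : ℤ) : ℝ) + 2 * ((m : ℝ) + 1) * t) * q) ^ 2)) *
            (2 * Real.pi * |((NN m j k : ℤ) : ℝ)| * ‖τ‖ *
              ‖zEx m j τ ((t : ℂ) * τ - (b : ℂ)) k‖) := by
            apply mul_le_mul_of_nonneg_right (hcfb k t ht) (by positivity)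
        _ = (4 * Real.pi * ‖τ‖ * Real.exp (2 * Real.pi * M ^ 2) *
              |((NN m j k : ℤ) : ℝ)|) *
            (Real.exp (-Real.pi * ((((NN m j k : ℤ) : ℝ) + 2 * ((m : ℝ) + 1) * t) * q) ^ 2) *
              ‖zEx m j τ ((t : ℂ) * τ - (b : ℂ)) k‖) := by ring
        _ ≤ (4 * Real.pi * ‖τ‖ * Real.exp (2 * Real.pi * M ^ 2) *
              |((NN m j k : ℤ) : ℝ)|) *
            Real.exp (-Real.pi * (T * ((NN m j k : ℤ) : ℝ) ^ 2 - 2 * S * |((NN m j k : ℤ) : ℝ)|)) := by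
            exact mul_le_mul_of_nonneg_left (hnormEx k t b ht) (by positivity)
        _ ≤ C₂ * |((NN m j k : ℤ) : ℝ)| *
            Real.exp (-Real.pi * (T * ((NN m j k : ℤ) : ℝ) ^ 2 - 2 * S * |((NN m j k : ℤ) : ℝ)|)) := by
            apply mul_le_mul_of_nonneg_right _ (Real.exp_pos _).le
            rw [hC2def]
            nlinarith [Real.exp_pos (2 * Real.pi * M ^ 2), abs_nonneg ((NN m j k : ℤ) : ℝ),
              norm_nonneg τ, Real.pi_pos]
    simp only [hudef]
    linarith [hb1, hb2]
  have hnormG' : ∀ (k : ℤ) (t : ℝ), ‖G' k t‖ ≤ u (NN m j k) := by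
    intro k t
    rw [hG'def]
    rw [norm_mul, norm_mul, Complex.norm_real, Real.norm_eq_abs, hnormcoef2, habs]
    have h1 : ‖zEx m j τ ((a : ℂ) * τ - (t : ℂ)) k‖ =
        ‖zEx m j τ ((a : ℂ) * τ - (b : ℂ)) k‖ := by
      rw [abs_zEx, abs_zEx]
    rw [h1]
    have h2 := hnormEx k a b (by simp)
    have h3 := hcfb k a (by simp)
    simp only [hudef]
    calc |zCF m j τ k a| * (2 * Real.pi * |((NN m j k : ℤ) : ℝ)| *
          ‖zEx m j τ ((a : ℂ) * τ - (b : ℂ)) k‖)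
        ≤ (2 * Real.exp (2 * Real.pi * M ^ 2) *
            Real.exp (-Real.pi * ((((NN m j k : ℤ) : ℝ) + 2 * ((m : ℝ) + 1) * a) * q) ^ 2)) *
          (2 * Real.pi * |((NN m j k : ℤ) : ℝ)| *
            ‖zEx m j τ ((a : ℂ) * τ - (b : ℂ)) k‖) := by
          apply mul_le_mul_of_nonneg_right h3 (by positivity)
      _ = (4 * Real.pi * Real.exp (2 * Real.pi * M ^ 2) * |((NN m j k : ℤ) : ℝ)|) *
          (Real.exp (-Real.pi * ((((NN m j k : ℤ) : ℝ) + 2 * ((m : ℝ) + 1) * a) * q) ^ 2) *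
            ‖zEx m j τ ((a : ℂ) * τ - (b : ℂ)) k‖) := by ring
      _ ≤ (4 * Real.pi * Real.exp (2 * Real.pi * M ^ 2) * |((NN m j k : ℤ) : ℝ)|) *
          Real.exp (-Real.pi * (T * ((NN m j k : ℤ) : ℝ) ^ 2 - 2 * S * |((NN m j k : ℤ) : ℝ)|)) := by
          exact mul_le_mul_of_nonneg_left h2 (by positivity)
      _ ≤ C₀ * Real.exp (-Real.pi * (T * ((NN m j k : ℤ) : ℝ) ^ 2 - 2 * S * |((NN m j k : ℤ) : ℝ)|)) +
          C₂ * |((NN m j k : ℤ) : ℝ)| *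
            Real.exp (-Real.pi * (T * ((NN m j k : ℤ) : ℝ) ^ 2 - 2 * S * |((NN m j k : ℤ) : ℝ)|)) := by
          have hC0' : (0:ℝ) ≤ C₀ * Real.exp (-Real.pi * (T * ((NN m j k : ℤ) : ℝ) ^ 2 -
              2 * S * |((NN m j k : ℤ) : ℝ)|)) := by positivity
          have : 4 * Real.pi * Real.exp (2 * Real.pi * M ^ 2) ≤ C₂ := by
            rw [hC2def]
            nlinarith [Real.exp_pos (2 * Real.pi * M ^ 2), norm_nonneg τ, Real.pi_pos]
          have h5 : 4 * Real.pi * Real.exp (2 * Real.pi * M ^ 2) * |((NN m j k : ℤ) : ℝ)| *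
              Real.exp (-Real.pi * (T * ((NN m j k : ℤ) : ℝ) ^ 2 -
                2 * S * |((NN m j k : ℤ) : ℝ)|)) ≤
              C₂ * |((NN m j k : ℤ) : ℝ)| *
              Real.exp (-Real.pi * (T * ((NN m j k : ℤ) : ℝ) ^ 2 -
                2 * S * |((NN m j k : ℤ) : ℝ)|)) := by
            apply mul_le_mul_of_nonneg_right _ (Real.exp_pos _).le
            exact mul_le_mul_of_nonneg_right this (abs_nonneg _)
          linarith
  -- summability of the series at the base points
  have hF0 : Summable (fun k : ℤ => F k a) := by
    apply Summable.of_norm_bounded huN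
    intro k
    rw [hFdef]
    simp only []
    rw [norm_mul, Complex.norm_real, Real.norm_eq_abs, habs]
    have h3 := hcfb k a (by simp)
    have h2 := hnormEx k a b (by simp)
    calc |zCF m j τ k a| * ‖zEx m j τ ((a : ℂ) * τ - (b : ℂ)) k‖
        ≤ (2 * Real.exp (2 * Real.pi * M ^ 2) *
            Real.exp (-Real.pi * ((((NN m j k : ℤ) : ℝ) + 2 * ((m : ℝ) + 1) * a) * q) ^ 2)) *
          ‖zEx m j τ ((a : ℂ) * τ - (b : ℂ)) k‖ := by
          apply mul_le_mul_of_nonneg_right h3 (norm_nonneg _)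
      _ = (2 * Real.exp (2 * Real.pi * M ^ 2)) *
          (Real.exp (-Real.pi * ((((NN m j k : ℤ) : ℝ) + 2 * ((m : ℝ) + 1) * a) * q) ^ 2) *
            ‖zEx m j τ ((a : ℂ) * τ - (b : ℂ)) k‖) := by ring
      _ ≤ (2 * Real.exp (2 * Real.pi * M ^ 2)) *
          Real.exp (-Real.pi * (T * ((NN m j k : ℤ) : ℝ) ^ 2 - 2 * S * |((NN m j k : ℤ) : ℝ)|)) := by
          exact mul_le_mul_of_nonneg_left h2 (by positivity)
      _ ≤ C₀ * Real.exp (-Real.pi * (T * (((NN m j k : ℤ)) : ℝ) ^ 2 - 2 * S * |((NN m j k : ℤ) : ℝ)|)) +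
          C₂ * |((NN m j k : ℤ) : ℝ)| *
            Real.exp (-Real.pi * (T * ((NN m j k : ℤ) : ℝ) ^ 2 - 2 * S * |((NN m j k : ℤ) : ℝ)|)) := by
          have : 2 * Real.exp (2 * Real.pi * M ^ 2) ≤ C₀ := by
            rw [hC0def]
            nlinarith [Real.exp_pos (2 * Real.pi * M ^ 2)]
          nlinarith [Real.exp_pos (-Real.pi * (T * ((NN m j k : ℤ) : ℝ) ^ 2 -
            2 * S * |((NN m j k : ℤ) : ℝ)|)),
            mul_nonneg (mul_nonneg hC2pos (abs_nonneg ((NN m j k : ℤ) : ℝ))) (hBnn (NN m j k))]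
      _ = u (NN m j k) := by simp only [hudef]
  have hG0 : Summable (fun k : ℤ => G k b) := hF0
  -- the two derivatives
  have hA : HasDerivAt (fun t : ℝ => ∑' k : ℤ, F k t) (∑' k : ℤ, F' k a) a := by
    apply hasDerivAt_tsum_of_isPreconnected huN Metric.isOpen_ball
      (convex_ball a 1).isPreconnected
      (fun k t _ => hFd k t)
      (fun k t htm => hnormF' k t (by
        rw [Metric.mem_ball, Real.dist_eq] at htm
        exact htm.le))
      (Metric.mem_ball_self one_pos) hF0 (Metric.mem_ball_self one_pos)
  have hB : HasDerivAt (fun t : ℝ => ∑' k : ℤ, G k t) (∑' k : ℤ, G' k b) b :=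
    hasDerivAt_tsum huN (fun k t => hGd k t) (fun k t => hnormG' k t) hG0 b
  -- rewrite the goal
  have e1 : (fun a' : ℝ => Rz m j τ ((a' : ℂ) * τ - (b : ℂ))) = fun t : ℝ => ∑' k : ℤ, F k t := by
    funext t
    exact Rz_eq m j τ hy.ne' t b
  have e2 : (fun b' : ℝ => Rz m j τ ((a : ℂ) * τ - (b' : ℂ))) = fun t : ℝ => ∑' k : ℤ, G k t := by
    funext t
    exact Rz_eq m j τ hy.ne' a t
  rw [e1, e2, hA.deriv, hB.deriv, ← tsum_mul_left]
  have hsf' : Summable (fun k : ℤ => F' k a) :=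
    Summable.of_norm_bounded huN (fun k => hnormF' k a (by simp))
  have hsg' : Summable (fun k : ℤ => τ * G' k b) :=
    (Summable.of_norm_bounded huN (fun k => hnormG' k b)).mul_left τ
  rw [← Summable.tsum_add hsf' hsg']
  -- RHS as a sum over k with n = -k
  have hRHS : -4 * ((Real.sqrt (((m : ℝ) + 1) * τ.im) : ℝ) : ℂ) *
      Complex.exp (-(4 * (Real.pi : ℂ)) * ((m : ℂ) + 1) * (a : ℂ) ^ 2 * (τ.im : ℂ)) *
      Theta j (m + 1) (-(starRingEnd ℂ) τ) (2 * (starRingEnd ℂ) ((a : ℂ) * τ - (b : ℂ))) =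
      ∑' k : ℤ, (-4 * ((Real.sqrt (((m : ℝ) + 1) * τ.im) : ℝ) : ℂ) *
        Complex.exp (-(4 * (Real.pi : ℂ)) * ((m : ℂ) + 1) * (a : ℂ) ^ 2 * (τ.im : ℂ)) *
        (Complex.exp (2 * (Real.pi : ℂ) * I * ((m + 1 : ℕ) : ℂ) *
            (2 * (starRingEnd ℂ) ((a : ℂ) * τ - (b : ℂ))) *
            (((-k : ℤ) : ℂ) + (j : ℂ) / (2 * ((m + 1 : ℕ) : ℂ)))) *
          Complex.exp (2 * (Real.pi : ℂ) * I * (-(starRingEnd ℂ) τ) * ((m + 1 : ℕ) : ℂ) *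
            (((-k : ℤ) : ℂ) + (j : ℂ) / (2 * ((m + 1 : ℕ) : ℂ))) ^ 2))) := by
    rw [Theta, ← tsum_mul_left]
    rw [← (Equiv.neg ℤ).tsum_eq]
    apply tsum_congr
    intro k
    simp only [Equiv.neg_apply]
  rw [hRHS]
  apply tsum_congr
  intro k
  -- termwise identity
  have hcancel : F' k a + τ * G' k b =
      ((-(2 * Real.exp (-Real.pi * ((((NN m j k : ℤ) : ℝ) + 2 * ((m : ℝ) + 1) * a) * q) ^ 2) *
        (2 * ((m : ℝ) + 1) * q)) : ℝ) : ℂ) * zEx m j τ ((a : ℂ) * τ - (b : ℂ)) k := by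
    rw [hF'def, hG'def]
    ring
  rw [hcancel]
  -- now the exponential identity
  have hsqrt : ((m : ℝ) + 1) * q = Real.sqrt (((m : ℝ) + 1) * τ.im) := by
    rw [hqdef]
    rw [show ((m : ℝ) + 1) * τ.im = ((m : ℝ) + 1) ^ 2 * (τ.im / ((m : ℝ) + 1)) from by
      field_simp]
    rw [Real.sqrt_mul (sq_nonneg _), Real.sqrt_sq hc0.le]
  have hofR : ((-(2 * Real.exp (-Real.pi * ((((NN m j k : ℤ) : ℝ) + 2 * ((m : ℝ) + 1) * a) * q) ^ 2) *
        (2 * ((m : ℝ) + 1) * q)) : ℝ) : ℂ) =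
      -4 * ((Real.sqrt (((m : ℝ) + 1) * τ.im) : ℝ) : ℂ) *
        Complex.exp (((-Real.pi * ((((NN m j k : ℤ) : ℝ) + 2 * ((m : ℝ) + 1) * a) ^ 2 *
          (τ.im / ((m : ℝ) + 1))) : ℝ) : ℂ)) := by
    rw [← hsqrt]
    push_cast [← Complex.ofReal_exp]
    rw [show (-Real.pi * ((((NN m j k : ℤ) : ℝ) + 2 * ((m : ℝ) + 1) * a) * q) ^ 2 : ℝ) =
        (-Real.pi * ((((NN m j k : ℤ) : ℝ) + 2 * ((m : ℝ) + 1) * a) ^ 2 *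
          (τ.im / ((m : ℝ) + 1))) : ℝ) from by
      rw [mul_pow, hqdef, Real.sq_sqrt (by positivity)]]
    push_cast
    ring
  rw [hofR, zEx]
  rw [mul_assoc (-4 * ((Real.sqrt (((m : ℝ) + 1) * τ.im) : ℝ) : ℂ)), ← Complex.exp_add,
    mul_assoc (-4 * ((Real.sqrt (((m : ℝ) + 1) * τ.im) : ℝ) : ℂ)), ← Complex.exp_add,
    ← Complex.exp_add]
  rw [exponent_id m j k τ a b]
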